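/- arXiv:1409.1755 — 2 statements merged into one kernel-verified Lean document; each statement's English description precedes it below -/
import Mathlib

section
/- (Dedekind's objection) The map C is not surjective onto [0,1): if z ∈ [0,1) and there exists an integer l ≥ 0 such that d_{l+2k−1}(z) = 9 for every k ≥ 1, then there do not exist x, y ∈ [0,1) with C(x,y) = z. -/
open Set

noncomputable def digit (k : ℕ) (x : ℝ) : ℤ :=
  ⌊(10 : ℝ) ^ k * x⌋ - 10 * ⌊(10 : ℝ) ^ (k - 1) * x⌋

noncomputable def cantorC (x y : ℝ) : ℝ :=
  (∑' k : ℕ, (digit (k + 1) x : ℝ) / 10 ^ (2 * (k + 1) - 1)) +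
    ∑' k : ℕ, (digit (k + 1) y : ℝ) / 10 ^ (2 * (k + 1))

lemma digit_succ (k : ℕ) (x : ℝ) :
    digit (k + 1) x = ⌊(10 : ℝ) * ((10 : ℝ) ^ k * x)⌋ - 10 * ⌊(10 : ℝ) ^ k * x⌋ := by
  unfold digit
  norm_num
  congr 1; ring

lemma digit_nonneg (k : ℕ) (x : ℝ) : 0 ≤ digit (k + 1) x := by
  rw [digit_succ]
  have h : (10 : ℤ) * ⌊(10 : ℝ) ^ k * x⌋ ≤ ⌊(10 : ℝ) * ((10 : ℝ) ^ k * x)⌋ := by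
    rw [Int.le_floor]
    push_cast
    have := Int.floor_le ((10 : ℝ) ^ k * x)
    nlinarith
  omega

lemma digit_le_nine (k : ℕ) (x : ℝ) : digit (k + 1) x ≤ 9 := by
  rw [digit_succ]
  have h : ⌊(10 : ℝ) * ((10 : ℝ) ^ k * x)⌋ < 10 * ⌊(10 : ℝ) ^ k * x⌋ + 10 := by
    rw [Int.floor_lt]
    push_cast
    have := Int.lt_floor_add_one ((10 : ℝ) ^ k * x)
    nlinarith
  omega

lemma sum_digits (x : ℝ) (hx : x ∈ Ico (0 : ℝ) 1) (n : ℕ) :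
    ∑ k ∈ Finset.range n, (digit (k + 1) x : ℝ) / 10 ^ (k + 1)
      = (⌊(10 : ℝ) ^ n * x⌋ : ℝ) / 10 ^ n := by
  induction n with
  | zero =>
      simp [Int.floor_eq_zero_iff.2 (by simpa using hx)]
  | succ n ih =>
      rw [Finset.sum_range_succ, ih, digit_succ]
      have h10 : (10 : ℝ) ^ (n + 1) = 10 * 10 ^ n := by ring
      push_cast
      rw [h10]
      field_simp
      ring

lemma summable_digits_like (c : ℕ → ℤ) (h0 : ∀ n, 0 ≤ c n) (h9 : ∀ n, c n ≤ 9) :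
    Summable (fun n => (c n : ℝ) / 10 ^ (n + 1)) := by
  have hg : Summable (fun n : ℕ => 9 * (1 / 10 : ℝ) ^ n) :=
    (summable_geometric_of_lt_one (by norm_num) (by norm_num)).mul_left 9
  refine Summable.of_nonneg_of_le (fun n => div_nonneg (by exact_mod_cast h0 n) (by positivity)) (fun n => ?_) hg
  · 
    have h1 : (c n : ℝ) ≤ 9 := by exact_mod_cast h9 n
    have h2 : (0 : ℝ) < 10 ^ (n + 1) := by positivity
    rw [div_le_iff₀ h2]
    have : (9 : ℝ) * (1 / 10) ^ n * 10 ^ (n + 1) = 90 := by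
      field_simp
      rw [pow_succ, ← mul_assoc, mul_assoc 9, ← mul_pow]; norm_num
    rw [this]
    linarith [h1, (show (0:ℝ) ≤ (c n : ℝ) from by exact_mod_cast h0 n)]

lemma tsum_digits (x : ℝ) (hx : x ∈ Ico (0 : ℝ) 1) :
    ∑' k : ℕ, (digit (k + 1) x : ℝ) / 10 ^ (k + 1) = x := by
  have hs : Summable (fun k => (digit (k + 1) x : ℝ) / 10 ^ (k + 1)) :=
    summable_digits_like _ (fun n => digit_nonneg n x) (fun n => digit_le_nine n x)
  have h1 := hs.hasSum.tendsto_sum_nat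
  have h1' : Filter.Tendsto (fun n => (⌊(10 : ℝ) ^ n * x⌋ : ℝ) / 10 ^ n)
      Filter.atTop (nhds (∑' k : ℕ, (digit (k + 1) x : ℝ) / 10 ^ (k + 1))) := by
    simpa [funext (sum_digits x hx)] using h1
  have h2 : Filter.Tendsto (fun n => (⌊(10 : ℝ) ^ n * x⌋ : ℝ) / 10 ^ n)
      Filter.atTop (nhds x) := by
    apply tendsto_of_tendsto_of_tendsto_of_le_of_le
      (g := fun n : ℕ => x - (1 / 10 : ℝ) ^ n) (h := fun _ : ℕ => x)
    · have : Filter.Tendsto (fun n : ℕ => (1 / 10 : ℝ) ^ n) Filter.atTop (nhds 0) :=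
        tendsto_pow_atTop_nhds_zero_of_lt_one (by norm_num) (by norm_num)
      simpa using tendsto_const_nhds.sub this
    · exact tendsto_const_nhds
    · intro n
      have hp : (0 : ℝ) < 10 ^ n := by positivity
      have hf := Int.lt_floor_add_one ((10 : ℝ) ^ n * x)
      have h10 : ((1:ℝ)/10) ^ n * 10 ^ n = 1 := by
        rw [← mul_pow]; norm_num
      rw [le_div_iff₀ hp]
      nlinarith [hf, h10]
    · intro n
      have hp : (0 : ℝ) < 10 ^ n := by positivity
      rw [div_le_iff₀ hp]
      have := Int.floor_le ((10 : ℝ) ^ n * x)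
      linarith [this]
  exact tendsto_nhds_unique h1' h2

lemma exists_digit_ne_nine (x : ℝ) (N : ℕ) : ∃ m : ℕ, digit (N + m + 1) x ≠ 9 := by
  by_contra h
  push_neg at h
  have key : ∀ j : ℕ, ⌊(10 : ℝ) ^ (N + j) * x⌋ + 1 = 10 ^ j * (⌊(10 : ℝ) ^ N * x⌋ + 1) := by
    intro j
    induction j with
    | zero => simp
    | succ j ih =>
        have h9 := h j
        rw [digit_succ] at h9
        have hpow : (10 : ℝ) ^ (N + (j + 1)) * x = 10 * ((10 : ℝ) ^ (N + j) * x) := by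
          ring
        rw [hpow, pow_succ]
        linarith [h9, ih]
  set c : ℤ := ⌊(10 : ℝ) ^ N * x⌋ + 1 with hc
  have hcx : (10 : ℝ) ^ N * x < c := by
    have := Int.lt_floor_add_one ((10 : ℝ) ^ N * x)
    push_cast [hc]
    linarith
  have hδ : (0 : ℝ) < (c : ℝ) / 10 ^ N - x := by
    have hp : (0 : ℝ) < 10 ^ N := by positivity
    rw [sub_pos, lt_div_iff₀ hp]
    linarith
  obtain ⟨j, hj⟩ := exists_pow_lt_of_lt_one hδ (show (1 / 10 : ℝ) < 1 by norm_num)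
  have hx : ((10 : ℝ) ^ j * c - 1) ≤ 10 ^ (N + j) * x := by
    have h1 := Int.floor_le ((10 : ℝ) ^ (N + j) * x)
    have h2 := key j
    have : ((⌊(10 : ℝ) ^ (N + j) * x⌋ : ℝ)) = 10 ^ j * c - 1 := by
      exact_mod_cast congrArg (fun t : ℤ => (t : ℝ)) (by omega : ⌊(10 : ℝ) ^ (N + j) * x⌋ = 10 ^ j * c - 1)
    linarith [this ▸ h1]
  have hpN : (0 : ℝ) < 10 ^ N := by positivity
  have hpj : (0 : ℝ) < 10 ^ j := by positivity
  have hNj : (10 : ℝ) ^ (N + j) = 10 ^ N * 10 ^ j := pow_add 10 N j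
  have h10 : ((1:ℝ)/10) ^ j * 10 ^ j = 1 := by rw [← mul_pow]; norm_num
  have h1N : (1 : ℝ) ≤ 10 ^ N := by
    simpa using pow_le_pow_left₀ (by norm_num : (0:ℝ) ≤ 1) (by norm_num : (1:ℝ) ≤ 10) N
  rw [lt_sub_iff_add_lt, lt_div_iff₀ hpN] at hj
  rw [hNj] at hx
  nlinarith [mul_lt_mul_of_pos_right hj hpj, h10, hx, h1N]

lemma expansion_unique_aux (a b : ℕ → ℤ) (ha0 : ∀ n, 0 ≤ a n) (ha9 : ∀ n, a n ≤ 9)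
    (hb0 : ∀ n, 0 ≤ b n) (hb9 : ∀ n, b n ≤ 9)
    (hane : ∀ N : ℕ, ∃ m : ℕ, a (N + m) ≠ 9)
    (heq : ∑' n : ℕ, ((a n : ℝ) / 10 ^ (n + 1)) = ∑' n : ℕ, ((b n : ℝ) / 10 ^ (n + 1)))
    (n : ℕ) (hmin : ∀ m, m < n → a m = b m) (hlt : a n < b n) : False := by
  have hfa : Summable (fun m => (a m : ℝ) / 10 ^ (m + 1)) := summable_digits_like a ha0 ha9
  have hgb : Summable (fun m => (b m : ℝ) / 10 ^ (m + 1)) := summable_digits_like b hb0 hb9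
  set h : ℕ → ℝ := fun m => (a m : ℝ) / 10 ^ (m + 1) - (b m : ℝ) / 10 ^ (m + 1) with hh
  have hsum : Summable h := hfa.sub hgb
  have htot : ∑' m : ℕ, h m = 0 := by
    rw [hh, Summable.tsum_sub hfa hgb, heq, sub_self]
  have hsplit := Summable.sum_add_tsum_nat_add (f := h) (n + 1) hsum
  have hrange : ∑ m ∈ Finset.range (n + 1), h m = h n := by
    rw [Finset.sum_range_succ]
    have hz : ∑ m ∈ Finset.range n, h m = 0 := Finset.sum_eq_zero (fun m hm => by
      simp [hh, hmin m (Finset.mem_range.1 hm)])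
    rw [hz, zero_add]
  have htail : ∑' m : ℕ, h (m + (n + 1)) = ((b n : ℝ) - a n) / 10 ^ (n + 1) := by
    have e : h n + ∑' m : ℕ, h (m + (n + 1)) = 0 := by
      rw [← hrange, hsplit, htot]
    have e2 : ∑' m : ℕ, h (m + (n + 1)) = - h n := by linarith
    rw [e2, hh]
    push_cast
    ring
  obtain ⟨m0, hm0⟩ := hane (n + 1)
  have hF : Summable (fun m => h (m + (n + 1))) := (summable_nat_add_iff (n + 1)).2 hsum
  have hG : Summable (fun m : ℕ => (9 : ℝ) / 10 ^ (m + n + 2)) := by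
    have : ∀ m : ℕ, (9 : ℝ) / 10 ^ (m + n + 2) = (9 / 10 ^ (n + 2)) * (1 / 10 : ℝ) ^ m := by
      intro m
      rw [show m + n + 2 = m + (n + 2) from by omega, pow_add]
      field_simp
      rw [← mul_pow]; norm_num
    rw [funext this]
    exact (summable_geometric_of_lt_one (by norm_num) (by norm_num)).mul_left _
  have hle : ∀ m : ℕ, h (m + (n + 1)) ≤ 9 / 10 ^ (m + n + 2) := by
    intro m
    simp only [hh]
    rw [show m + (n + 1) + 1 = m + n + 2 from by omega]
    have hp : (0 : ℝ) < 10 ^ (m + n + 2) := by positivity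
    have h1 : ((a (m + (n + 1)) : ℝ)) ≤ 9 := by exact_mod_cast ha9 _
    have h2 : (0 : ℝ) ≤ (b (m + (n + 1)) : ℝ) := by exact_mod_cast hb0 _
    rw [div_sub_div_same, div_le_div_iff₀ hp hp]
    nlinarith
  have hm0' : h (m0 + (n + 1)) < 9 / 10 ^ (m0 + n + 2) := by
    simp only [hh]
    rw [show m0 + (n + 1) + 1 = m0 + n + 2 from by omega]
    have hp : (0 : ℝ) < 10 ^ (m0 + n + 2) := by positivity
    have ha8 : a (m0 + (n + 1)) ≤ 8 := by
      have := ha9 (m0 + (n + 1))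
      have hne : a (m0 + (n + 1)) ≠ 9 := by
        rw [show m0 + (n + 1) = (n + 1) + m0 from by omega]
        exact hm0
      omega
    have h1 : ((a (m0 + (n + 1)) : ℝ)) ≤ 8 := by exact_mod_cast ha8
    have h2 : (0 : ℝ) ≤ (b (m0 + (n + 1)) : ℝ) := by exact_mod_cast hb0 _
    rw [div_sub_div_same, div_lt_div_iff₀ hp hp]
    nlinarith
  have hGsum : ∑' m : ℕ, (9 : ℝ) / 10 ^ (m + n + 2) = 1 / 10 ^ (n + 1) := by
    have e : ∀ m : ℕ, (9 : ℝ) / 10 ^ (m + n + 2) = (9 / 10 ^ (n + 2)) * (1 / 10 : ℝ) ^ m := by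
      intro m
      rw [show m + n + 2 = m + (n + 2) from by omega, pow_add]
      field_simp
      rw [← mul_pow]; norm_num
    rw [funext e, tsum_mul_left, tsum_geometric_of_lt_one (by norm_num) (by norm_num)]
    rw [show (n : ℕ) + 2 = (n + 1) + 1 from rfl, pow_succ]
    norm_num
    field_simp
  have hstrict : ∑' m : ℕ, h (m + (n + 1)) < 1 / 10 ^ (n + 1) := by
    calc ∑' m : ℕ, h (m + (n + 1)) < ∑' m : ℕ, (9 : ℝ) / 10 ^ (m + n + 2) :=
          Summable.tsum_lt_tsum hle hm0' hF hG
      _ = 1 / 10 ^ (n + 1) := hGsum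
  rw [htail] at hstrict
  have h1 : (1 : ℝ) ≤ (b n : ℝ) - a n := by
    have hi : a n + 1 ≤ b n := hlt
    have hr : ((a n + 1 : ℤ) : ℝ) ≤ ((b n : ℤ) : ℝ) := Int.cast_le.2 hi
    push_cast at hr
    linarith
  have hp : (0 : ℝ) < 10 ^ (n + 1) := by positivity
  rw [div_lt_div_iff₀ hp hp] at hstrict
  nlinarith

lemma expansion_unique (a b : ℕ → ℤ) (ha0 : ∀ n, 0 ≤ a n) (ha9 : ∀ n, a n ≤ 9)
    (hb0 : ∀ n, 0 ≤ b n) (hb9 : ∀ n, b n ≤ 9)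
    (hane : ∀ N : ℕ, ∃ m : ℕ, a (N + m) ≠ 9)
    (hbne : ∀ N : ℕ, ∃ m : ℕ, b (N + m) ≠ 9)
    (heq : ∑' n : ℕ, ((a n : ℝ) / 10 ^ (n + 1)) = ∑' n : ℕ, ((b n : ℝ) / 10 ^ (n + 1))) :
    ∀ n, a n = b n := by
  by_contra hc
  push_neg at hc
  have hne : ∃ n, a n ≠ b n := hc
  set n := Nat.find hne with hn
  have hspec : a n ≠ b n := Nat.find_spec hne
  have hmin : ∀ m, m < n → a m = b m := fun m hm => not_not.1 (Nat.find_min hne hm)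
  rcases lt_or_gt_of_ne hspec with hlt | hgt
  · exact expansion_unique_aux a b ha0 ha9 hb0 hb9 hane heq n hmin hlt
  · exact expansion_unique_aux b a hb0 hb9 ha0 ha9 hbne heq.symm n
      (fun m hm => (hmin m hm).symm) hgt

noncomputable def interleave (x y : ℝ) (m : ℕ) : ℤ :=
  if Even m then digit (m / 2 + 1) x else digit (m / 2 + 1) y

lemma interleave_even (x y : ℝ) (k : ℕ) : interleave x y (2 * k) = digit (k + 1) x := by
  simp [interleave, show (2 * k) / 2 = k from by omega]

lemma interleave_odd (x y : ℝ) (k : ℕ) : interleave x y (2 * k + 1) = digit (k + 1) y := by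
  have hne : ¬ Even (2 * k + 1) := by
    simp [Nat.even_add_one]
  simp [interleave, hne, show (2 * k + 1) / 2 = k from by omega]

lemma interleave_nonneg (x y : ℝ) (m : ℕ) : 0 ≤ interleave x y m := by
  unfold interleave
  split
  · exact digit_nonneg _ x
  · exact digit_nonneg _ y

lemma interleave_le_nine (x y : ℝ) (m : ℕ) : interleave x y m ≤ 9 := by
  unfold interleave
  split
  · exact digit_le_nine _ x
  · exact digit_le_nine _ y

lemma interleave_ne_nine (x y : ℝ) (N : ℕ) : ∃ m : ℕ, interleave x y (N + m) ≠ 9 := by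
  obtain ⟨m, hm⟩ := exists_digit_ne_nine x N
  refine ⟨2 * (N + m) - N, ?_⟩
  rw [show N + (2 * (N + m) - N) = 2 * (N + m) from by omega, interleave_even]
  exact hm

lemma summable_digits_like' (c : ℕ → ℤ) (h0 : ∀ n, 0 ≤ c n) (h9 : ∀ n, c n ≤ 9)
    (e : ℕ → ℕ) (hek : ∀ k, k ≤ e k) :
    Summable (fun n => (c n : ℝ) / 10 ^ (e n + 1)) := by
  have hg : Summable (fun n : ℕ => 9 * (1 / 10 : ℝ) ^ n) :=
    (summable_geometric_of_lt_one (by norm_num) (by norm_num)).mul_left 9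
  refine Summable.of_nonneg_of_le
    (fun n => div_nonneg (by exact_mod_cast h0 n) (by positivity)) (fun n => ?_) hg
  have h1 : ((c n : ℝ)) ≤ 9 := by exact_mod_cast h9 n
  have hp : (0 : ℝ) < 10 ^ (e n + 1) := by positivity
  rw [div_le_iff₀ hp]
  have hge : (10 : ℝ) ^ n ≤ 10 ^ (e n + 1) := pow_le_pow_right₀ (by norm_num) (by have := hek n; omega)
  have h10 : ((1 : ℝ) / 10) ^ n * 10 ^ n = 1 := by rw [← mul_pow]; norm_num
  have hmul : ((1 : ℝ) / 10) ^ n * 10 ^ n ≤ (1 / 10) ^ n * 10 ^ (e n + 1) :=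
    mul_le_mul_of_nonneg_left hge (by positivity)
  nlinarith [hmul, h10]

lemma cantorC_eq_tsum (x y : ℝ) :
    cantorC x y = ∑' m : ℕ, ((interleave x y m : ℝ) / 10 ^ (m + 1)) := by
  have he : Summable (fun k : ℕ => ((interleave x y (2 * k) : ℝ) / 10 ^ (2 * k + 1))) :=
    summable_digits_like' (fun k => interleave x y (2 * k))
      (fun k => interleave_nonneg x y _) (fun k => interleave_le_nine x y _)
      (fun k => 2 * k) (fun k => by change k ≤ 2 * k; omega)
  have ho : Summable (fun k : ℕ => ((interleave x y (2 * k + 1) : ℝ) / 10 ^ (2 * k + 1 + 1))) :=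
    summable_digits_like' (fun k => interleave x y (2 * k + 1))
      (fun k => interleave_nonneg x y _) (fun k => interleave_le_nine x y _)
      (fun k => 2 * k + 1) (fun k => by change k ≤ 2 * k + 1; omega)
  have key := tsum_even_add_odd (f := fun m : ℕ => ((interleave x y m : ℝ) / 10 ^ (m + 1))) he ho
  rw [← key]
  unfold cantorC
  congr 1
  · apply tsum_congr
    intro k
    show (digit (k + 1) x : ℝ) / 10 ^ (2 * (k + 1) - 1)
        = (interleave x y (2 * k) : ℝ) / 10 ^ (2 * k + 1)
    rw [interleave_even, show 2 * (k + 1) - 1 = 2 * k + 1 from by omega]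
  · apply tsum_congr
    intro k
    show (digit (k + 1) y : ℝ) / 10 ^ (2 * (k + 1))
        = (interleave x y (2 * k + 1) : ℝ) / 10 ^ (2 * k + 1 + 1)
    rw [interleave_odd, show 2 * (k + 1) = 2 * k + 1 + 1 from by omega]

/-- **Dedekind's objection.** If `z ∈ [0,1)` has `d_{l+2k-1}(z) = 9` for every `k ≥ 1`
(for some `l ≥ 0`), then `z` has no preimage under Cantor's interleaving map `C`. -/
theorem cantorC_not_surjective (z : ℝ) (hz : z ∈ Ico (0 : ℝ) 1) (l : ℕ)
    (hl : ∀ k : ℕ, 1 ≤ k → digit (l + 2 * k - 1) z = 9) :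
    ¬ ∃ x ∈ Ico (0 : ℝ) 1, ∃ y ∈ Ico (0 : ℝ) 1, cantorC x y = z := by
  rintro ⟨x, hx, y, hy, hxy⟩
  set a : ℕ → ℤ := interleave x y with ha
  set b : ℕ → ℤ := fun m => digit (m + 1) z with hb
  have heq : ∑' n : ℕ, ((a n : ℝ) / 10 ^ (n + 1)) = ∑' n : ℕ, ((b n : ℝ) / 10 ^ (n + 1)) := by
    rw [← cantorC_eq_tsum x y, hxy, hb]
    exact (tsum_digits z hz).symm
  have hbne : ∀ N : ℕ, ∃ m : ℕ, b (N + m) ≠ 9 := by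
    intro N
    obtain ⟨m, hm⟩ := exists_digit_ne_nine z N
    exact ⟨m, hm⟩
  have hall : ∀ n, a n = b n :=
    expansion_unique a b (interleave_nonneg x y) (interleave_le_nine x y)
      (fun m => digit_nonneg m z) (fun m => digit_le_nine m z)
      (interleave_ne_nine x y) hbne heq
  rcases Nat.even_or_odd l with ⟨t, ht⟩ | ⟨t, ht⟩
  · -- l = t + t : digits of x are eventually 9
    obtain ⟨m, hm⟩ := exists_digit_ne_nine x t
    apply hm
    have h1 := hall (2 * (t + m))
    rw [ha, interleave_even] at h1
    have h2 := hl (m + 1) (by omega)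
    rw [show l + 2 * (m + 1) - 1 = 2 * (t + m) + 1 from by omega] at h2
    rw [show t + m + 1 = (t + m) + 1 from rfl, h1, hb]
    exact h2
  · -- l = 2t + 1 : digits of y are eventually 9
    obtain ⟨m, hm⟩ := exists_digit_ne_nine y t
    apply hm
    have h1 := hall (2 * (t + m) + 1)
    rw [ha, interleave_odd] at h1
    have h2 := hl (m + 1) (by omega)
    rw [show l + 2 * (m + 1) - 1 = 2 * (t + m) + 1 + 1 from by omega] at h2
    rw [show t + m + 1 = (t + m) + 1 from rfl, h1, hb]
    exact h2
end

section
/- The extension f : [0,1]² → [0,1] of Cantor's interleaving map is injective. -/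
open Set

/-- The extension `f : [0,1]² → [0,1]` of Cantor's interleaving map:
`f(x,y) = C(x,y)` for `x, y ∈ [0,1)`; `f(1,y) = 0.9y₁9y₂9y₃⋯` for `y ∈ [0,1)`;
`f(x,1) = 0.x₁9x₂9x₃9⋯` for `x ∈ [0,1)`; and `f(1,1) = 1`. -/
noncomputable def cantorF (x y : ℝ) : ℝ :=
  if x < 1 ∧ y < 1 then cantorC x y
  else if x = 1 ∧ y < 1 then
    (∑' k : ℕ, (9 : ℝ) / 10 ^ (2 * (k + 1) - 1)) +
      ∑' k : ℕ, (digit (k + 1) y : ℝ) / 10 ^ (2 * (k + 1))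
  else if x < 1 ∧ y = 1 then
    (∑' k : ℕ, (digit (k + 1) x : ℝ) / 10 ^ (2 * (k + 1) - 1)) +
      ∑' k : ℕ, (9 : ℝ) / 10 ^ (2 * (k + 1))
  else 1

namespace CantorProof

open Finset Filter Topology

noncomputable def S (a : ℕ → ℤ) : ℝ := ∑' n, (a n : ℝ) / 10 ^ (n + 1)

def Dg (a : ℕ → ℤ) : Prop := ∀ n, 0 ≤ a n ∧ a n ≤ 9

def Pr (a : ℕ → ℤ) : Prop := ∀ N, ∃ n, N ≤ n ∧ a n ≠ 9

lemma summable_digits (a : ℕ → ℤ) (ha : Dg a) (e : ℕ → ℕ) (he : ∀ n, n ≤ e n) :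
    Summable (fun n => (a n : ℝ) / 10 ^ (e n)) := by
  refine Summable.of_nonneg_of_le (fun n => ?_) (fun n => ?_)
    ((summable_geometric_of_lt_one (by norm_num) (by norm_num : (1/10:ℝ) < 1)).mul_left 9)
  · exact div_nonneg (by exact_mod_cast (ha n).1) (by positivity)
  · have : 9 * (1/10 : ℝ) ^ n = 9 / 10 ^ n := by rw [one_div, inv_pow]; ring
    rw [this]
    gcongr
    · exact_mod_cast (ha n).2
    · norm_num
    · exact he n

lemma summable_S (a : ℕ → ℤ) (ha : Dg a) : Summable (fun n => (a n : ℝ) / 10 ^ (n + 1)) :=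
  summable_digits a ha _ (fun n => Nat.le_succ n)

noncomputable def tl (a : ℕ → ℤ) (k : ℕ) : ℝ := ∑' n, (a (n + k) : ℝ) / 10 ^ (n + k + 1)

lemma S_eq_sum_add_tl (a : ℕ → ℤ) (ha : Dg a) (k : ℕ) :
    S a = (∑ n ∈ range k, (a n : ℝ) / 10 ^ (n + 1)) + tl a k :=
  (Summable.sum_add_tsum_nat_add k (summable_S a ha)).symm

lemma geom (k : ℕ) : ∑' n : ℕ, (9 : ℝ) / 10 ^ (n + k + 1) = 1 / 10 ^ k := by
  have h : ∀ n : ℕ, (9 : ℝ) / 10 ^ (n + k + 1) = (9 / 10 ^ (k + 1)) * (1/10) ^ n := by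
    intro n
    rw [one_div, inv_pow]
    rw [show n + k + 1 = n + (k + 1) by omega, pow_add]
    field_simp
  rw [tsum_congr h, tsum_mul_left, tsum_geometric_of_lt_one (by norm_num) (by norm_num)]
  rw [pow_succ]
  field_simp
  ring

lemma summable_tl (a : ℕ → ℤ) (ha : Dg a) (k : ℕ) :
    Summable (fun n => (a (n + k) : ℝ) / 10 ^ (n + k + 1)) :=
  summable_digits (fun n => a (n + k)) (fun n => ha (n + k)) (fun n => n + k + 1)
    (fun n => (by omega : n ≤ n + k + 1))

lemma summable_nine (k : ℕ) : Summable (fun n : ℕ => (9 : ℝ) / 10 ^ (n + k + 1)) := by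
  have := summable_digits (fun _ => (9 : ℤ)) (fun _ => ⟨by norm_num, le_refl _⟩)
    (fun n => n + k + 1) (fun n => (by omega : n ≤ n + k + 1))
  simpa using this

lemma tl_nonneg (a : ℕ → ℤ) (ha : Dg a) (k : ℕ) : 0 ≤ tl a k :=
  tsum_nonneg fun n => div_nonneg (by exact_mod_cast (ha (n + k)).1) (by positivity)

lemma tl_le (a : ℕ → ℤ) (ha : Dg a) (k : ℕ) : tl a k ≤ 1 / 10 ^ k := by
  rw [← geom k]
  exact Summable.tsum_le_tsum (fun n => by
      exact div_le_div_of_nonneg_right (by exact_mod_cast (ha (n+k)).2) (by positivity)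
        |>.trans_eq rfl)
    (summable_tl a ha k) (summable_nine k)

lemma tl_lt (a : ℕ → ℤ) (ha : Dg a) (hp : Pr a) (k : ℕ) : tl a k < 1 / 10 ^ k := by
  obtain ⟨j, hj, hj9⟩ := hp k
  rw [← geom k]
  refine Summable.tsum_lt_tsum (i := j - k) (fun n => ?_) ?_ (summable_tl a ha k) (summable_nine k)
  · exact div_le_div_of_nonneg_right (by exact_mod_cast (ha (n+k)).2 : (a (n+k) : ℝ) ≤ 9) (by positivity)
  · have hjk : j - k + k = j := by omega
    rw [hjk]
    have h9 : (a j : ℝ) < 9 := by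
      exact_mod_cast lt_of_le_of_ne (ha j).2 hj9
    exact div_lt_div_of_pos_right h9 (by positivity)

end CantorProof

namespace CantorProof
open Finset Filter Topology

def Nint (a : ℕ → ℤ) : ℕ → ℤ
  | 0 => 0
  | k + 1 => 10 * Nint a k + a k

lemma tl_rec (a : ℕ → ℤ) (ha : Dg a) (k : ℕ) :
    tl a k = (a k : ℝ) / 10 ^ (k + 1) + tl a (k + 1) := by
  unfold tl
  rw [Summable.tsum_eq_zero_add (summable_tl a ha k)]
  simp only [show (0:ℕ) + k = k from by omega,
    show ∀ n : ℕ, n + 1 + k = n + (k + 1) from fun n => by omega]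

lemma key (a : ℕ → ℤ) (ha : Dg a) (k : ℕ) :
    (10 : ℝ) ^ k * S a = (Nint a k : ℝ) + 10 ^ k * tl a k := by
  induction k with
  | zero =>
    simp [Nint, tl, S]
  | succ k ih =>
    have hrec := tl_rec a ha k
    have h10 : (10 : ℝ) ^ (k + 1) = 10 * 10 ^ k := by ring
    have : (10 : ℝ) ^ (k+1) * S a = 10 * ((Nint a k : ℝ) + 10 ^ k * tl a k) := by
      rw [h10, mul_assoc, ← ih]
    rw [this, hrec]
    show (10:ℝ) * (↑(Nint a k) + 10 ^ k * (↑(a k) / 10 ^ (k + 1) + tl a (k+1)))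
      = ↑(Nint a (k+1)) + 10 ^ (k+1) * tl a (k+1)
    have hN : (Nint a (k+1) : ℝ) = 10 * (Nint a k : ℝ) + (a k : ℝ) := by
      show ((10 * Nint a k + a k : ℤ) : ℝ) = _
      push_cast; ring
    have hpow : (10:ℝ)^k * ((a k : ℝ) / 10 ^ (k+1)) = (a k : ℝ) / 10 := by
      rw [h10]; field_simp
    rw [hN, mul_add ((10:ℝ) ^ k), hpow, h10]
    ring

lemma floor_key (a : ℕ → ℤ) (ha : Dg a) (hp : Pr a) (k : ℕ) :
    ⌊(10 : ℝ) ^ k * S a⌋ = Nint a k := by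
  rw [key a ha k]
  have h0 : 0 ≤ (10:ℝ) ^ k * tl a k := mul_nonneg (by positivity) (tl_nonneg a ha k)
  have h1 : (10:ℝ) ^ k * tl a k < 1 := by
    have := tl_lt a ha hp k
    calc (10:ℝ) ^ k * tl a k < 10 ^ k * (1 / 10 ^ k) := by
          exact mul_lt_mul_of_pos_left this (by positivity)
      _ = 1 := by field_simp
  have hz : ⌊(10:ℝ) ^ k * tl a k⌋ = 0 := Int.floor_eq_zero_iff.2 ⟨h0, h1⟩
  rw [add_comm, Int.floor_add_intCast, hz, zero_add]

end CantorProof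

namespace CantorProof
open Finset Filter Topology

lemma digit_extract (a : ℕ → ℤ) (ha : Dg a) (hp : Pr a) (k : ℕ) :
    digit (k + 1) (S a) = a k := by
  unfold digit
  rw [show k + 1 - 1 = k from rfl, floor_key a ha hp (k+1), floor_key a ha hp k]
  show Nint a (k+1) - 10 * Nint a k = a k
  show 10 * Nint a k + a k - 10 * Nint a k = a k
  ring

lemma S_inj (a b : ℕ → ℤ) (ha : Dg a) (hpa : Pr a) (hb : Dg b) (hpb : Pr b)
    (h : S a = S b) : a = b := by
  funext k
  rw [← digit_extract a ha hpa k, ← digit_extract b hb hpb k, h]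

lemma S_lt_one (a : ℕ → ℤ) (ha : Dg a) (hp : Pr a) : S a < 1 := by
  have := key a ha 0
  simp only [pow_zero, one_mul] at this
  rw [this]
  have := tl_lt a ha hp 0
  simp only [pow_zero] at this
  show (Nint a 0 : ℝ) + tl a 0 < 1
  show ((0 : ℤ) : ℝ) + tl a 0 < 1
  simpa using this

lemma S_nonneg (a : ℕ → ℤ) (ha : Dg a) : 0 ≤ S a :=
  tsum_nonneg fun n => div_nonneg (by exact_mod_cast (ha n).1) (by positivity)

/-- digits of a real number -/
noncomputable def dig (x : ℝ) (k : ℕ) : ℤ := digit (k + 1) x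

lemma dig_Dg (x : ℝ) : Dg (dig x) := by
  intro k
  unfold dig digit
  rw [show k + 1 - 1 = k from rfl]
  set t := (10 : ℝ) ^ k * x with ht
  have h1 : (10 : ℝ) ^ (k + 1) * x = 10 * t := by rw [ht]; ring
  rw [h1]
  constructor
  · have : ((10 * ⌊t⌋ : ℤ) : ℝ) ≤ 10 * t := by
      push_cast
      have := Int.floor_le t
      nlinarith
    have := Int.le_floor.2 this
    omega
  · have : 10 * t < ((10 * ⌊t⌋ + 10 : ℤ) : ℝ) := by
      push_cast
      have := Int.lt_floor_add_one t
      nlinarith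
    have := Int.floor_lt.2 this
    omega

lemma dig_partial (x : ℝ) (hx : x ∈ Set.Ico (0:ℝ) 1) (k : ℕ) :
    ∑ n ∈ range k, (dig x n : ℝ) / 10 ^ (n + 1) = (⌊(10:ℝ) ^ k * x⌋ : ℝ) / 10 ^ k := by
  induction k with
  | zero =>
    simp [Int.floor_eq_zero_iff.2 hx]
  | succ k ih =>
    rw [Finset.sum_range_succ, ih]
    unfold dig digit
    rw [show k + 1 - 1 = k from rfl]
    push_cast
    field_simp
    ring

lemma dig_hasSum (x : ℝ) (hx : x ∈ Set.Ico (0:ℝ) 1) : S (dig x) = x := by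
  have hsum := summable_S (dig x) (dig_Dg x)
  refine HasSum.tsum_eq ?_
  rw [hsum.hasSum_iff_tendsto_nat]
  have heq : (fun k => ∑ n ∈ range k, (dig x n : ℝ) / 10 ^ (n + 1))
      = fun k => (⌊(10:ℝ) ^ k * x⌋ : ℝ) / 10 ^ k := funext fun k => dig_partial x hx k
  rw [heq]
  have hup : ∀ k : ℕ, (⌊(10:ℝ) ^ k * x⌋ : ℝ) / 10 ^ k ≤ x := by
    intro k
    rw [div_le_iff₀ (by positivity)]
    calc ((⌊(10:ℝ) ^ k * x⌋ : ℝ)) ≤ (10:ℝ) ^ k * x := Int.floor_le _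
      _ = x * 10 ^ k := by ring
  have hlo : ∀ k : ℕ, x - (1/10 : ℝ) ^ k ≤ (⌊(10:ℝ) ^ k * x⌋ : ℝ) / 10 ^ k := by
    intro k
    rw [le_div_iff₀ (by positivity : (0:ℝ) < 10 ^ k)]
    have h1 : (10:ℝ) ^ k * x - 1 ≤ (⌊(10:ℝ) ^ k * x⌋ : ℝ) := by
      have := Int.lt_floor_add_one ((10:ℝ) ^ k * x)
      linarith
    have h2 : (x - (1/10:ℝ) ^ k) * 10 ^ k = 10 ^ k * x - 1 := by
      rw [sub_mul, one_div, inv_pow, inv_mul_cancel₀ (by positivity)]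
      ring
    linarith [h2.le, h1]
  have hl : Tendsto (fun k : ℕ => x - (1/10 : ℝ) ^ k) atTop (nhds x) := by
    have : Tendsto (fun k : ℕ => (1/10 : ℝ) ^ k) atTop (nhds 0) :=
      tendsto_pow_atTop_nhds_zero_of_lt_one (by norm_num) (by norm_num)
    simpa using (tendsto_const_nhds (x := x)).sub this
  exact tendsto_of_tendsto_of_tendsto_of_le_of_le hl tendsto_const_nhds
    (fun k => hlo k) (fun k => hup k)

lemma dig_Pr (x : ℝ) (hx : x ∈ Set.Ico (0:ℝ) 1) : Pr (dig x) := by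
  intro N
  by_contra hcon
  push_neg at hcon
  have hall : ∀ n, N ≤ n → dig x n = 9 := fun n hn => hcon n hn
  have hS : S (dig x) = x := dig_hasSum x hx
  have hsplit := S_eq_sum_add_tl (dig x) (dig_Dg x) N
  have htl : tl (dig x) N = 1 / 10 ^ N := by
    unfold tl
    rw [tsum_congr (fun n => by rw [hall (n + N) (by omega)]), ← geom N]
    norm_num
  have hpart := dig_partial x hx N
  rw [hS, hpart, htl] at hsplit
  have hlt := Int.lt_floor_add_one ((10:ℝ) ^ N * x)
  have hpos : (0:ℝ) < 10 ^ N := by positivity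
  rw [← add_div] at hsplit
  -- hsplit : x = (⌊10^N x⌋ + 1) / 10^N
  have : (10:ℝ) ^ N * x = (⌊(10:ℝ) ^ N * x⌋ : ℝ) + 1 := by
    field_simp at hsplit
    rw [mul_comm x] at hsplit
    nlinarith [hsplit]
  linarith

end CantorProof

namespace CantorProof
open Finset Filter Topology

def il (a b : ℕ → ℤ) (n : ℕ) : ℤ := if Even n then a (n / 2) else b (n / 2)

lemma il_even (a b : ℕ → ℤ) (k : ℕ) : il a b (2 * k) = a k := by
  simp [il, even_two_mul k, Nat.mul_div_cancel_left k (by norm_num : 0 < 2)]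

lemma il_odd (a b : ℕ → ℤ) (k : ℕ) : il a b (2 * k + 1) = b k := by
  have hodd : ¬ Even (2 * k + 1) := by simp [Nat.even_add_one, even_two_mul k]
  simp [il, hodd, Nat.mul_add_div (by norm_num : 0 < 2)]

lemma il_Dg (a b : ℕ → ℤ) (ha : Dg a) (hb : Dg b) : Dg (il a b) := by
  intro n
  unfold il
  split
  · exact ha _
  · exact hb _

lemma il_Pr_left (a b : ℕ → ℤ) (ha : Pr a) : Pr (il a b) := by
  intro N
  obtain ⟨n, hn, h9⟩ := ha N
  exact ⟨2 * n, by omega, by rwa [il_even]⟩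

lemma il_Pr_right (a b : ℕ → ℤ) (hb : Pr b) : Pr (il a b) := by
  intro N
  obtain ⟨n, hn, h9⟩ := hb N
  exact ⟨2 * n + 1, by omega, by rwa [il_odd]⟩

lemma S_il (a b : ℕ → ℤ) (ha : Dg a) (hb : Dg b) :
    (∑' k : ℕ, (a k : ℝ) / 10 ^ (2 * (k + 1) - 1)) +
      (∑' k : ℕ, (b k : ℝ) / 10 ^ (2 * (k + 1))) = S (il a b) := by
  have he : (fun k : ℕ => ((il a b (2 * k) : ℤ) : ℝ) / 10 ^ (2 * k + 1))
      = fun k : ℕ => (a k : ℝ) / 10 ^ (2 * k + 1) := funext fun k => by rw [il_even]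
  have ho : (fun k : ℕ => ((il a b (2 * k + 1) : ℤ) : ℝ) / 10 ^ (2 * k + 1 + 1))
      = fun k : ℕ => (b k : ℝ) / 10 ^ (2 * k + 2) := funext fun k => by rw [il_odd]
  have hse : Summable (fun k : ℕ => ((il a b (2 * k) : ℤ) : ℝ) / 10 ^ (2 * k + 1)) := by
    rw [he]; exact summable_digits a ha (fun k => 2 * k + 1) (fun k => (by omega : k ≤ 2 * k + 1))
  have hso : Summable (fun k : ℕ => ((il a b (2 * k + 1) : ℤ) : ℝ) / 10 ^ (2 * k + 1 + 1)) := by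
    rw [ho]
    exact summable_digits b hb (fun k => 2 * k + 2) (fun k => (by omega : k ≤ 2 * k + 2))
  have hkey := tsum_even_add_odd (f := fun n => ((il a b n : ℤ) : ℝ) / 10 ^ (n + 1)) hse hso
  rw [S, ← hkey]
  congr 1
  · exact tsum_congr fun k => by
      show (a k : ℝ) / 10 ^ (2 * (k + 1) - 1) = ((il a b (2 * k) : ℤ) : ℝ) / 10 ^ (2 * k + 1)
      rw [il_even, show 2 * (k + 1) - 1 = 2 * k + 1 from by omega]
  · exact tsum_congr fun k => by
      show (b k : ℝ) / 10 ^ (2 * (k + 1)) = ((il a b (2 * k + 1) : ℤ) : ℝ) / 10 ^ (2 * k + 1 + 1)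
      rw [il_odd, show 2 * (k + 1) = 2 * k + 1 + 1 from by omega]

noncomputable def dd (x : ℝ) : ℕ → ℤ := if x = 1 then fun _ => 9 else dig x

noncomputable def code (x y : ℝ) : ℕ → ℤ := il (dd x) (dd y)

lemma dd_Dg (x : ℝ) : Dg (dd x) := by
  unfold dd
  split
  · exact fun n => ⟨by norm_num, le_refl _⟩
  · exact dig_Dg x

lemma code_Dg (x y : ℝ) : Dg (code x y) := il_Dg _ _ (dd_Dg x) (dd_Dg y)

lemma mem_Ico_of (x : ℝ) (hx : x ∈ Set.Icc (0:ℝ) 1) (h : x ≠ 1) : x ∈ Set.Ico (0:ℝ) 1 :=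
  ⟨hx.1, lt_of_le_of_ne hx.2 h⟩

lemma code_Pr (x y : ℝ) (hx : x ∈ Set.Icc (0:ℝ) 1) (hy : y ∈ Set.Icc (0:ℝ) 1)
    (h : ¬(x = 1 ∧ y = 1)) : Pr (code x y) := by
  by_cases hx1 : x = 1
  · have hy1 : y ≠ 1 := fun hy1 => h ⟨hx1, hy1⟩
    have : dd y = dig y := if_neg hy1
    exact il_Pr_right _ _ (this ▸ dig_Pr y (mem_Ico_of y hy hy1))
  · have : dd x = dig x := if_neg hx1
    exact il_Pr_left _ _ (this ▸ dig_Pr x (mem_Ico_of x hx hx1))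

lemma dd_inj (x x' : ℝ) (hx : x ∈ Set.Icc (0:ℝ) 1) (hx' : x' ∈ Set.Icc (0:ℝ) 1)
    (h : dd x = dd x') : x = x' := by
  by_cases h1 : x = 1 <;> by_cases h2 : x' = 1
  · rw [h1, h2]
  · exfalso
    rw [dd, if_pos h1, dd, if_neg h2] at h
    obtain ⟨n, _, h9⟩ := dig_Pr x' (mem_Ico_of x' hx' h2) 0
    exact h9 (congrFun h n).symm
  · exfalso
    rw [dd, if_neg h1, dd, if_pos h2] at h
    obtain ⟨n, _, h9⟩ := dig_Pr x (mem_Ico_of x hx h1) 0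
    exact h9 (congrFun h n)
  · rw [dd, if_neg h1, dd, if_neg h2] at h
    rw [← dig_hasSum x (mem_Ico_of x hx h1), ← dig_hasSum x' (mem_Ico_of x' hx' h2), h]

lemma cantorF_eq (x y : ℝ) (hx : x ∈ Set.Icc (0:ℝ) 1) (hy : y ∈ Set.Icc (0:ℝ) 1)
    (h : ¬(x = 1 ∧ y = 1)) : cantorF x y = S (code x y) := by
  have hnine : ∀ e : ℕ → ℕ, (fun k : ℕ => (9:ℝ) / 10 ^ (e k))
      = fun k : ℕ => (((fun _ => (9:ℤ)) k : ℤ) : ℝ) / 10 ^ (e k) := by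
    intro e; funext k; norm_num
  by_cases hx1 : x = 1
  · have hy1 : y ≠ 1 := fun hy1 => h ⟨hx1, hy1⟩
    have hylt : y < 1 := lt_of_le_of_ne hy.2 hy1
    have hxnlt : ¬ x < 1 := by rw [hx1]; exact lt_irrefl 1
    rw [cantorF, if_neg (fun hc => hxnlt hc.1), if_pos ⟨hx1, hylt⟩]
    rw [code, dd, if_pos hx1, dd, if_neg hy1]
    rw [← S_il (fun _ => 9) (dig y) (fun n => ⟨by norm_num, le_refl _⟩) (dig_Dg y)]
    exact congrArg₂ (· + ·) (tsum_congr fun k => by norm_num) rfl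
  · have hxlt : x < 1 := lt_of_le_of_ne hx.2 hx1
    by_cases hy1 : y = 1
    · have hynlt : ¬ y < 1 := by rw [hy1]; exact lt_irrefl 1
      rw [cantorF, if_neg (fun hc => hynlt hc.2), if_neg (fun hc => hx1 hc.1),
        if_pos ⟨hxlt, hy1⟩]
      rw [code, dd, if_neg hx1, dd, if_pos hy1]
      rw [← S_il (dig x) (fun _ => 9) (dig_Dg x) (fun n => ⟨by norm_num, le_refl _⟩)]
      exact congrArg₂ (· + ·) rfl (tsum_congr fun k => by norm_num)
    · have hylt : y < 1 := lt_of_le_of_ne hy.2 hy1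
      rw [cantorF, if_pos ⟨hxlt, hylt⟩]
      rw [code, dd, if_neg hx1, dd, if_neg hy1]
      rw [cantorC, ← S_il (dig x) (dig y) (dig_Dg x) (dig_Dg y)]
      rfl

lemma cantorF_one_one : cantorF 1 1 = 1 := by
  rw [cantorF, if_neg (fun hc => lt_irrefl (1:ℝ) hc.1),
    if_neg (fun hc => lt_irrefl (1:ℝ) hc.2), if_neg (fun hc => lt_irrefl (1:ℝ) hc.1)]

lemma il_inj (a b a' b' : ℕ → ℤ) (h : il a b = il a' b') : a = a' ∧ b = b' := by
  constructor
  · funext k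
    have := congrFun h (2 * k)
    rwa [il_even, il_even] at this
  · funext k
    have := congrFun h (2 * k + 1)
    rwa [il_odd, il_odd] at this

end CantorProof

open CantorProof

/-- The extension `f : [0,1]² → [0,1]` of Cantor's interleaving map is injective. -/
theorem cantorF_injOn :
    Set.InjOn (fun p : ℝ × ℝ => cantorF p.1 p.2) (Icc 0 1 ×ˢ Icc 0 1) := by
  rintro ⟨x, y⟩ ⟨hx, hy⟩ ⟨x', y'⟩ ⟨hx', hy'⟩ h
  simp only at h hx hy hx' hy'
  by_cases hp : x = 1 ∧ y = 1 <;> by_cases hq : x' = 1 ∧ y' = 1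
  · exact Prod.ext (hp.1.trans hq.1.symm) (hp.2.trans hq.2.symm)
  · exfalso
    rw [hp.1, hp.2, cantorF_one_one, cantorF_eq x' y' hx' hy' hq] at h
    exact absurd h.symm (ne_of_lt (S_lt_one _ (code_Dg x' y') (code_Pr x' y' hx' hy' hq)))
  · exfalso
    rw [hq.1, hq.2, cantorF_one_one, cantorF_eq x y hx hy hp] at h
    exact absurd h (ne_of_lt (S_lt_one _ (code_Dg x y) (code_Pr x y hx hy hp)))
  · rw [cantorF_eq x y hx hy hp, cantorF_eq x' y' hx' hy' hq] at h
    have hcode : code x y = code x' y' :=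
      S_inj _ _ (code_Dg x y) (code_Pr x y hx hy hp) (code_Dg x' y')
        (code_Pr x' y' hx' hy' hq) h
    obtain ⟨h1, h2⟩ := il_inj _ _ _ _ hcode
    exact Prod.ext (dd_inj x x' hx hx' h1) (dd_inj y y' hy hy' h2)
end
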